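/- (Csiszár.) Let X be an ℝ^d-valued random vector with probability density f satisfying Rényi's condition, and suppose f·log₂(1/f) is Lebesgue integrable. Then lim_{h→0⁺} ( 𝔈_{𝒜*_h}(X) − d·log₂(1/h) ) = 𝔈(f). -/

import Mathlib

open MeasureTheory
open MeasureTheory Real Set Filter
open scoped NNReal ENNReal

/-- The entropy summand `t ↦ t·log₂(1/t)` (equal to `0` at `t = 0`). -/
noncomputable def entTerm (t : ℝ) : ℝ := t * Real.logb 2 (1 / t)

/-- The cell of the cubic partition `𝒜*_h` of `ℝ^d` indexed by `i ∈ ℤ^d`,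
namely `∏_j [i_j h, (i_j + 1) h)`. -/
def cubicCell {d : ℕ} (h : ℝ) (i : Fin d → ℤ) : Set (Fin d → ℝ) :=
  {x | ∀ j, x j ∈ Set.Ico ((i j : ℝ) * h) (((i j : ℝ) + 1) * h)}

namespace Csi

noncomputable def φp (t : ℝ) : ℝ := Real.negMulLog (min t 1)
noncomputable def φm (t : ℝ) : ℝ := max (t * Real.log t) 0

lemma phim_nonneg (t : ℝ) : 0 ≤ φm t := le_max_right _ _

lemma phip_nonneg {t : ℝ} (ht : 0 ≤ t) : 0 ≤ φp t :=
  Real.negMulLog_nonneg (le_min ht zero_le_one) (min_le_right _ _)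

lemma phip_le_one {t : ℝ} (ht : 0 ≤ t) : φp t ≤ 1 := by
  rcases eq_or_lt_of_le (le_min ht zero_le_one) with h0 | h0
  · simp [φp, ← h0]
  · have h1 : min t 1 ≤ 1 := min_le_right _ _
    have hlog : Real.log (min t 1)⁻¹ ≤ (min t 1)⁻¹ - 1 :=
      Real.log_le_sub_one_of_pos (by positivity)
    have : φp t = (min t 1) * Real.log (min t 1)⁻¹ := by
      simp [φp, Real.negMulLog, Real.log_inv]
    rw [this]
    calc (min t 1) * Real.log (min t 1)⁻¹ ≤ (min t 1) * ((min t 1)⁻¹ - 1) := by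
          exact mul_le_mul_of_nonneg_left hlog h0.le
      _ = 1 - min t 1 := by field_simp
      _ ≤ 1 := by linarith [h0]

lemma negMulLog_eq_phi {t : ℝ} (ht : 0 ≤ t) : Real.negMulLog t = φp t - φm t := by
  rcases le_total t 1 with h | h
  · have h1 : min t 1 = t := min_eq_left h
    have h2 : t * Real.log t ≤ 0 :=
      mul_nonpos_of_nonneg_of_nonpos ht (Real.log_nonpos ht h)
    simp [φp, φm, h1, max_eq_right h2]
  · have h1 : min t 1 = 1 := min_eq_right h
    have h2 : 0 ≤ t * Real.log t :=
      mul_nonneg ht (Real.log_nonneg h)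
    simp [φp, φm, h1, max_eq_left h2, Real.negMulLog]

lemma phim_convex : ConvexOn ℝ (Ici (0:ℝ)) φm := by
  have := Real.convexOn_mul_log.sup (convexOn_const (0:ℝ) (convex_Ici (0:ℝ)))
  exact this

lemma continuous_phim : Continuous φm := (Real.continuous_mul_log).max continuous_const

lemma continuous_phip : Continuous φp :=
  Real.continuous_negMulLog.comp (continuous_id.min continuous_const)

lemma phip_le_abs {t : ℝ} (ht : 0 ≤ t) : φp t ≤ |Real.negMulLog t| := by
  rcases le_total t 1 with h | h
  · rw [φp, min_eq_left h]; exact le_abs_self _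
  · rw [φp, min_eq_right h]; simp

lemma phim_le_abs {t : ℝ} (ht : 0 ≤ t) : φm t ≤ |Real.negMulLog t| := by
  rcases le_total t 1 with h | h
  · have h2 : t * Real.log t ≤ 0 :=
      mul_nonpos_of_nonneg_of_nonpos ht (Real.log_nonpos ht h)
    rw [φm, max_eq_right h2]; positivity
  · have : φm t = -Real.negMulLog t := by
      rw [φm, max_eq_left (mul_nonneg ht (Real.log_nonneg h))]
      simp [Real.negMulLog]
    rw [this]; exact neg_le_abs _

lemma negMulLog_monoOn : MonotoneOn Real.negMulLog (Icc 0 (Real.exp (-1))) := by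
  apply monotoneOn_of_deriv_nonneg (convex_Icc _ _)
    (Real.continuous_negMulLog.continuousOn)
  · intro x hx
    rw [interior_Icc] at hx
    exact ((Real.differentiableOn_negMulLog x (by simp [ne_of_gt hx.1])).differentiableAt
      (by refine IsOpen.mem_nhds ?_ (by simp [ne_of_gt hx.1]) ; exact isOpen_compl_singleton)).differentiableWithinAt
  · intro x hx
    rw [interior_Icc] at hx
    rw [Real.deriv_negMulLog (ne_of_gt hx.1)]
    have : Real.log x ≤ -1 := by
      calc Real.log x ≤ Real.log (Real.exp (-1)) :=
            Real.log_le_log (by exact hx.1) hx.2.le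
        _ = -1 := Real.log_exp _
    linarith

lemma negMulLog_sum_le {ι : Type*} (s : Finset ι) (a : ι → ℝ) (ha : ∀ i ∈ s, 0 ≤ a i) :
    Real.negMulLog (∑ i ∈ s, a i) ≤ ∑ i ∈ s, Real.negMulLog (a i) := by
  have hS : Real.negMulLog (∑ i ∈ s, a i) = ∑ i ∈ s, -(a i * Real.log (∑ j ∈ s, a j)) := by
    rw [Real.negMulLog, neg_mul, Finset.sum_mul, ← Finset.sum_neg_distrib]
  rw [hS]
  apply Finset.sum_le_sum
  intro i hi
  rw [Real.negMulLog]
  rcases eq_or_lt_of_le (ha i hi) with h0 | h0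
  · simp [← h0]
  · have hle : a i ≤ ∑ j ∈ s, a j := Finset.single_le_sum ha hi
    have := Real.log_le_log h0 hle
    nlinarith

lemma mul_negMulLog_div {a m : ℝ} (hm : 0 < m) : m * Real.negMulLog (a / m) = Real.negMulLog a + a * Real.log m := by
  rw [div_eq_mul_inv, Real.negMulLog_mul]
  have : Real.negMulLog m⁻¹ = m⁻¹ * Real.log m := by
    rw [Real.negMulLog, Real.log_inv]; ring
  rw [this]
  field_simp


variable {d : ℕ}

lemma cubicCell_eq_pi (h : ℝ) (i : Fin d → ℤ) :
    cubicCell h i = Set.pi Set.univ (fun j => Ico ((i j : ℝ) * h) (((i j : ℝ) + 1) * h)) := by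
  ext x; simp [cubicCell, Set.mem_pi]

lemma measurableSet_cubicCell (h : ℝ) (i : Fin d → ℤ) : MeasurableSet (cubicCell h i) := by
  rw [cubicCell_eq_pi]
  exact MeasurableSet.univ_pi fun j => measurableSet_Ico

lemma volume_cubicCell {h : ℝ} (i : Fin d → ℤ) :
    volume (cubicCell h i) = ENNReal.ofReal h ^ d := by
  rw [cubicCell_eq_pi, volume_pi_pi]
  have : ∀ j : Fin d, volume (Ico ((i j : ℝ) * h) (((i j : ℝ) + 1) * h)) = ENNReal.ofReal h := by
    intro j; rw [Real.volume_Ico]; congr 1; ring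
  simp [this, Finset.prod_const]

lemma mem_cubicCell {h : ℝ} (hh : 0 < h) {x : Fin d → ℝ} {i : Fin d → ℤ} :
    x ∈ cubicCell h i ↔ ∀ j, ⌊x j / h⌋ = i j := by
  unfold cubicCell
  simp only [Set.mem_setOf_eq, Set.mem_Ico]
  apply forall_congr'
  intro j
  rw [Int.floor_eq_iff]
  constructor
  · rintro ⟨h1, h2⟩
    exact ⟨(le_div_iff₀ hh).2 (by linarith), (div_lt_iff₀ hh).2 (by linarith)⟩
  · rintro ⟨h1, h2⟩
    have := (le_div_iff₀ hh).1 h1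
    have := (div_lt_iff₀ hh).1 h2
    constructor <;> push_cast <;> linarith

lemma pairwise_disjoint_cubicCell {h : ℝ} (hh : 0 < h) :
    Pairwise (Function.onFun Disjoint (cubicCell (d := d) h)) := by
  intro i j hij
  rw [Function.onFun, Set.disjoint_left]
  intro x hxi hxj
  apply hij
  funext k
  rw [← (mem_cubicCell hh).1 hxi k, ← (mem_cubicCell hh).1 hxj k]

lemma iUnion_cubicCell {h : ℝ} (hh : 0 < h) :
    (⋃ i : Fin d → ℤ, cubicCell h i) = Set.univ := by
  ext x
  simp only [Set.mem_iUnion, Set.mem_univ, iff_true]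
  exact ⟨fun j => ⌊x j / h⌋, (mem_cubicCell hh).2 fun j => rfl⟩

/-- the anchor of a cell: the integer corner of the unit cell containg the corner `i•h`. -/
noncomputable def anchor (h : ℝ) (i : Fin d → ℤ) : Fin d → ℤ := fun j => ⌊(i j : ℝ) * h⌋

/-- The double-size integer cell. -/
def bigCell (k : Fin d → ℤ) : Set (Fin d → ℝ) :=
  Set.pi Set.univ (fun j => Ico ((k j : ℝ)) ((k j : ℝ) + 2))

lemma measurableSet_bigCell (k : Fin d → ℤ) : MeasurableSet (bigCell k) :=
  MeasurableSet.univ_pi fun j => measurableSet_Ico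

lemma volume_bigCell (k : Fin d → ℤ) : volume (bigCell k) = ENNReal.ofReal 2 ^ d := by
  rw [bigCell, volume_pi_pi]
  have : ∀ j : Fin d, volume (Ico ((k j : ℝ)) ((k j : ℝ) + 2)) = ENNReal.ofReal 2 := by
    intro j; rw [Real.volume_Ico]; congr 1; ring
  simp [this, Finset.prod_const]

lemma cubicCell_subset_bigCell {h : ℝ} (hh : 0 < h) (hh1 : h ≤ 1) (i : Fin d → ℤ) :
    cubicCell h i ⊆ bigCell (anchor h i) := by
  intro x hx
  intro j _
  have h1 := hx j
  simp only [Set.mem_Ico] at h1 ⊢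
  have hfl : (⌊(i j : ℝ) * h⌋ : ℝ) ≤ (i j : ℝ) * h := Int.floor_le _
  have hfl2 : (i j : ℝ) * h < (⌊(i j : ℝ) * h⌋ : ℝ) + 1 := Int.lt_floor_add_one _
  unfold anchor
  constructor
  · linarith [h1.1]
  · have : x j < (i j : ℝ) * h + h := by linarith [h1.2]
    linarith

/-- decomposition of a big cell into `2^d` unit cells -/
lemma bigCell_eq_iUnion (k : Fin d → ℤ) :
    bigCell k = ⋃ σ : Fin d → Bool, cubicCell 1 (fun j => k j + if σ j then 1 else 0) := by
  ext x
  simp only [Set.mem_iUnion, bigCell, Set.mem_pi, Set.mem_univ, forall_true_left, cubicCell,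
    Set.mem_setOf_eq, Set.mem_Ico, mul_one]
  constructor
  · intro hx
    refine ⟨fun j => decide ((k j : ℝ) + 1 ≤ x j), fun j => ?_⟩
    rcases le_or_gt ((k j : ℝ) + 1) (x j) with hj | hj
    · rw [if_pos (by simpa using hj)]
      push_cast
      refine ⟨by simpa using hj, ?_⟩
      have := (hx j).2
      linarith
    · rw [if_neg (by simpa using hj.not_ge)]
      push_cast
      exact ⟨by simpa using (hx j).1, by simpa using hj⟩
  · rintro ⟨σ, hσ⟩
    intro j
    rcases hσ j with ⟨h1, h2⟩
    push_cast at h1 h2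
    constructor
    · refine le_trans ?_ h1
      rcases hb : σ j <;> simp
    · refine lt_of_lt_of_le h2 ?_
      rcases hb : σ j <;> simp [hb] <;> linarith

end Csi

namespace Csi
variable {d : ℕ}

noncomputable def cellAvg (f : (Fin d → ℝ) → ℝ) (h : ℝ) (i : Fin d → ℤ) : ℝ :=
  (∫ x in cubicCell h i, f x) / h ^ d

noncomputable def idx (h : ℝ) (x : Fin d → ℝ) : Fin d → ℤ := fun j => ⌊x j / h⌋

noncomputable def gridAvg (f : (Fin d → ℝ) → ℝ) (h : ℝ) (x : Fin d → ℝ) : ℝ :=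
  cellAvg f h (idx h x)

lemma measurable_idx (h : ℝ) : Measurable (idx (d := d) h) := by
  unfold idx
  exact measurable_pi_lambda _ fun j => by fun_prop

instance : MeasurableSingletonClass (Fin d → ℤ) := by infer_instance

lemma idx_eq_of_mem {h : ℝ} (hh : 0 < h) {x : Fin d → ℝ} {i : Fin d → ℤ}
    (hx : x ∈ cubicCell h i) : idx h x = i :=
  funext fun j => (mem_cubicCell hh).1 hx j

lemma gridAvg_eq_on_cell {f : (Fin d → ℝ) → ℝ} {h : ℝ} (hh : 0 < h) {x : Fin d → ℝ}
    {i : Fin d → ℤ} (hx : x ∈ cubicCell h i) : gridAvg f h x = cellAvg f h i := by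
  rw [gridAvg, idx_eq_of_mem hh hx]

lemma measurable_comp_gridAvg {f : (Fin d → ℝ) → ℝ} (g : ℝ → ℝ) (h : ℝ) :
    Measurable (fun x => g (gridAvg f h x)) :=
  (measurable_of_countable (fun i : Fin d → ℤ => g (cellAvg f h i))).comp (measurable_idx h)

lemma cellAvg_nonneg {f : (Fin d → ℝ) → ℝ} (hf : ∀ x, 0 ≤ f x) {h : ℝ} (hh : 0 ≤ h)
    (i : Fin d → ℤ) : 0 ≤ cellAvg f h i := by
  apply div_nonneg _ (by positivity)
  exact setIntegral_nonneg (measurableSet_cubicCell h i) fun x _ => hf x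

lemma gridAvg_nonneg {f : (Fin d → ℝ) → ℝ} (hf : ∀ x, 0 ≤ f x) {h : ℝ} (hh : 0 ≤ h)
    (x : Fin d → ℝ) : 0 ≤ gridAvg f h x := cellAvg_nonneg hf hh _

/-- decomposition of a lintegral of a function of the grid average over the cells. -/
lemma lintegral_comp_gridAvg {f : (Fin d → ℝ) → ℝ} (g : ℝ → ℝ) {h : ℝ} (hh : 0 < h) :
    ∫⁻ x, ENNReal.ofReal (g (gridAvg f h x)) =
      ∑' i : Fin d → ℤ, ENNReal.ofReal (g (cellAvg f h i)) * ENNReal.ofReal h ^ d := by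
  conv_lhs => rw [← setLIntegral_univ, ← iUnion_cubicCell hh,
    lintegral_iUnion (fun i => measurableSet_cubicCell h i) (pairwise_disjoint_cubicCell hh)]
  congr 1
  funext i
  rw [show ∫⁻ x in cubicCell h i, ENNReal.ofReal (g (gridAvg f h x)) =
      ∫⁻ _ in cubicCell h i, ENNReal.ofReal (g (cellAvg f h i)) from
    setLIntegral_congr_fun (measurableSet_cubicCell h i)
      (fun x hx => by rw [gridAvg_eq_on_cell hh hx]),
    setLIntegral_const, volume_cubicCell]

section Jensen

variable {f : (Fin d → ℝ) → ℝ} {h : ℝ}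

lemma cell_finiteMeasure (hh : 0 < h) (i : Fin d → ℤ) :
    IsFiniteMeasure (volume.restrict (cubicCell h i)) := by
  constructor
  rw [Measure.restrict_apply_univ, volume_cubicCell]
  exact ENNReal.pow_lt_top ENNReal.ofReal_lt_top

lemma cell_neZero (hh : 0 < h) (i : Fin d → ℤ) :
    NeZero (volume.restrict (cubicCell h i)) := by
  constructor
  rw [← Measure.measure_univ_ne_zero, Measure.restrict_apply_univ, volume_cubicCell]
  positivity

lemma cell_average_eq (hh : 0 < h) (i : Fin d → ℤ) (g : (Fin d → ℝ) → ℝ) :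
    ⨍ x in cubicCell h i, g x = (h ^ d)⁻¹ * ∫ x in cubicCell h i, g x := by
  rw [setAverage_eq, smul_eq_mul, measureReal_def, volume_cubicCell]
  congr
  rw [← ENNReal.ofReal_pow hh.le, ENNReal.toReal_ofReal (by positivity)]

/-- Per-cell concave Jensen for `negMulLog`. -/
lemma cell_jensen_concave (hh : 0 < h) (hf : ∀ x, 0 ≤ f x)
    (hfi : Integrable f) (hgi : Integrable (fun x => Real.negMulLog (f x))) (i : Fin d → ℤ) :
    ∫ x in cubicCell h i, Real.negMulLog (f x) ≤ h ^ d * Real.negMulLog (cellAvg f h i) := by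
  haveI := cell_finiteMeasure (d := d) hh i
  haveI := cell_neZero (d := d) hh i
  have key : ⨍ x in cubicCell h i, Real.negMulLog (f x) ≤
      Real.negMulLog (⨍ x in cubicCell h i, f x) := by
    apply ConcaveOn.le_map_average Real.concaveOn_negMulLog
      Real.continuous_negMulLog.continuousOn isClosed_Ici
      (Filter.Eventually.of_forall fun x => hf x) hfi.restrict hgi.restrict
  rw [cell_average_eq hh, cell_average_eq hh] at key
  have hpow : (0:ℝ) < h ^ d := by positivity
  have := mul_le_mul_of_nonneg_left key hpow.le
  rw [mul_inv_cancel_left₀ hpow.ne'] at this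
  refine this.trans_eq ?_
  rw [cellAvg, div_eq_inv_mul]

/-- Per-cell convex Jensen for `φm`. -/
lemma cell_jensen_convex (hh : 0 < h) (hf : ∀ x, 0 ≤ f x)
    (hfi : Integrable f) (hgi : Integrable (fun x => φm (f x))) (i : Fin d → ℤ) :
    h ^ d * φm (cellAvg f h i) ≤ ∫ x in cubicCell h i, φm (f x) := by
  haveI := cell_finiteMeasure (d := d) hh i
  haveI := cell_neZero (d := d) hh i
  have key : φm (⨍ x in cubicCell h i, f x) ≤ ⨍ x in cubicCell h i, φm (f x) := by
    apply ConvexOn.map_average_le phim_convex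
      continuous_phim.continuousOn isClosed_Ici
      (Filter.Eventually.of_forall fun x => hf x) hfi.restrict hgi.restrict
  rw [cell_average_eq hh, cell_average_eq hh] at key
  have hpow : (0:ℝ) < h ^ d := by positivity
  have := mul_le_mul_of_nonneg_left key hpow.le
  rw [mul_inv_cancel_left₀ hpow.ne'] at this
  refine le_trans ?_ this
  rw [cellAvg, div_eq_inv_mul]

end Jensen
end Csi

namespace Csi
variable {d : ℕ}

lemma volume_closedBall_pi (x : Fin d → ℝ) {r : ℝ} (hr : 0 ≤ r) :
    volume (Metric.closedBall x r) = ENNReal.ofReal (2 * r) ^ d := by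
  rw [closedBall_pi x hr, volume_pi_pi]
  simp [Real.volume_closedBall]

noncomputable def vfam (d : ℕ) : VitaliFamily (volume : Measure (Fin d → ℝ)) := by
  apply Vitali.vitaliFamily volume (6 ^ d)
  intro x
  apply Filter.Eventually.frequently
  filter_upwards [self_mem_nhdsWithin] with r (hr : 0 < r)
  rw [volume_closedBall_pi x (by linarith : (0:ℝ) ≤ 3 * r),
    volume_closedBall_pi x hr.le]
  calc ENNReal.ofReal (2 * (3 * r)) ^ d = (ENNReal.ofReal 3 * ENNReal.ofReal (2 * r)) ^ d := by
        rw [← ENNReal.ofReal_mul (by norm_num)]; ring_nf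
    _ = ENNReal.ofReal 3 ^ d * ENNReal.ofReal (2 * r) ^ d := mul_pow _ _ _
    _ ≤ ((6 : ℝ≥0) : ℝ≥0∞) ^ d * ENNReal.ofReal (2 * r) ^ d := by
        gcongr
        · exact le_trans (by norm_num) (le_refl _)
    _ = ((6 ^ d : ℝ≥0) : ℝ≥0∞) * ENNReal.ofReal (2 * r) ^ d := by push_cast; ring

def closedCell (h : ℝ) (i : Fin d → ℤ) : Set (Fin d → ℝ) :=
  Set.pi Set.univ (fun j => Icc ((i j : ℝ) * h) (((i j : ℝ) + 1) * h))

lemma isClosed_closedCell (h : ℝ) (i : Fin d → ℤ) : IsClosed (closedCell h i) :=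
  isClosed_set_pi fun j _ => isClosed_Icc

lemma volume_closedCell {h : ℝ} (i : Fin d → ℤ) :
    volume (closedCell h i) = ENNReal.ofReal h ^ d := by
  rw [closedCell, volume_pi_pi]
  have : ∀ j : Fin d, volume (Icc ((i j : ℝ) * h) (((i j : ℝ) + 1) * h)) = ENNReal.ofReal h := by
    intro j; rw [Real.volume_Icc]; congr 1; ring
  simp [this, Finset.prod_const]

lemma cubicCell_subset_closedCell (h : ℝ) (i : Fin d → ℤ) :
    cubicCell h i ⊆ closedCell h i := by
  intro x hx j _
  exact Ico_subset_Icc_self (hx j)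

lemma cubicCell_ae_eq_closedCell {h : ℝ} (hh : 0 < h) (i : Fin d → ℤ) :
    (cubicCell h i : Set (Fin d → ℝ)) =ᶠ[ae volume] closedCell h i := by
  apply ae_eq_of_subset_of_measure_ge (cubicCell_subset_closedCell h i)
  · rw [volume_closedCell, volume_cubicCell]
  · exact (measurableSet_cubicCell h i).nullMeasurableSet
  · rw [volume_closedCell]
    exact (ENNReal.pow_lt_top ENNReal.ofReal_lt_top).ne

lemma interior_closedCell_nonempty {h : ℝ} (hh : 0 < h) (i : Fin d → ℤ) :
    (interior (closedCell h i)).Nonempty := by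
  rw [closedCell, interior_pi_set Set.finite_univ]
  refine ⟨fun j => (i j : ℝ) * h + h / 2, fun j _ => ?_⟩
  simp only [interior_Icc, Set.mem_Ioo]
  constructor <;> nlinarith

lemma closedCell_subset_closedBall {h : ℝ} (hh : 0 < h) {x : Fin d → ℝ} {i : Fin d → ℤ}
    (hx : x ∈ cubicCell h i) : closedCell h i ⊆ Metric.closedBall x h := by
  intro y hy
  rw [Metric.mem_closedBall, dist_pi_le_iff hh.le]
  intro j
  have h1 := hx j
  have h2 := hy j (Set.mem_univ j)
  simp only [Set.mem_Ico] at h1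
  simp only [Set.mem_Icc] at h2
  rw [Real.dist_eq, abs_le]
  constructor <;> nlinarith [h1.1, h1.2, h2.1, h2.2]

lemma closedCell_mem_setsAt {h : ℝ} (hh : 0 < h) {x : Fin d → ℝ} {i : Fin d → ℤ}
    (hx : x ∈ cubicCell h i) : closedCell h i ∈ (vfam d).setsAt x := by
  refine ⟨isClosed_closedCell h i, interior_closedCell_nonempty hh i, h,
    closedCell_subset_closedBall hh hx, ?_⟩
  rw [volume_closedBall_pi x (by linarith : (0:ℝ) ≤ 3 * h), volume_closedCell]
  calc ENNReal.ofReal (2 * (3 * h)) ^ d = (ENNReal.ofReal 6 * ENNReal.ofReal h) ^ d := by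
        rw [← ENNReal.ofReal_mul (by norm_num)]; ring_nf
    _ = ENNReal.ofReal 6 ^ d * ENNReal.ofReal h ^ d := mul_pow _ _ _
    _ ≤ ((6 ^ d : ℝ≥0) : ℝ≥0∞) * ENNReal.ofReal h ^ d := by
        gcongr
        push_cast
        gcongr
        exact le_trans (by norm_num) (le_refl _)

/-- Lebesgue differentiation along shrinking grid cells. -/
lemma ae_tendsto_gridAvg {f : (Fin d → ℝ) → ℝ} (hfi : Integrable f volume)
    {u : ℕ → ℝ} (hu : ∀ n, 0 < u n) (hu0 : Filter.Tendsto u Filter.atTop (nhds 0)) :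
    ∀ᵐ x, Filter.Tendsto (fun n => gridAvg f (u n) x) Filter.atTop (nhds (f x)) := by
  filter_upwards [(vfam d).ae_tendsto_average hfi.locallyIntegrable] with x hx
  have hmem : ∀ n, x ∈ cubicCell (u n) (idx (u n) x) :=
    fun n => (mem_cubicCell (hu n)).2 fun j => rfl
  have T : Filter.Tendsto (fun n => closedCell (u n) (idx (u n) x)) Filter.atTop
      ((vfam d).filterAt x) := by
    rw [VitaliFamily.tendsto_filterAt_iff]
    constructor
    · exact Filter.Eventually.of_forall fun n => closedCell_mem_setsAt (hu n) (hmem n)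
    · intro ε hε
      filter_upwards [hu0.eventually_lt_const hε] with n hn
      exact (closedCell_subset_closedBall (hu n) (hmem n)).trans
        (Metric.closedBall_subset_closedBall hn.le)
  have := hx.comp T
  apply this.congr
  intro n
  show ⨍ y in closedCell (u n) (idx (u n) x), f y = _
  rw [setAverage_eq, measureReal_def, volume_closedCell, smul_eq_mul,
    setIntegral_congr_set (cubicCell_ae_eq_closedCell (hu n) (idx (u n) x)).symm]
  rw [← ENNReal.ofReal_pow (hu n).le, ENNReal.toReal_ofReal (pow_nonneg (hu n).le d)]
  rw [gridAvg, cellAvg, div_eq_inv_mul]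

end Csi

namespace Csi
variable {d : ℕ}

section Group
variable (f : (Fin d → ℝ) → ℝ)

/-- unit-cell masses -/
noncomputable def q (k : Fin d → ℤ) : ℝ := ∫ x in cubicCell 1 k, f x

/-- mass of the double cell -/
noncomputable def Q (k : Fin d → ℤ) : ℝ := ∫ x in bigCell k, f x

noncomputable def cst (d : ℕ) : ℝ := d * Real.log 2 + 2 ^ d * Real.exp 1

/-- the summable majorant -/
noncomputable def R (k : Fin d → ℤ) : ℝ :=
  ∑ σ : Fin d → Bool, (Real.negMulLog (q f (fun j => k j + if σ j then 1 else 0))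
    + cst d * q f (fun j => k j + if σ j then 1 else 0))

variable {f}
variable (hf : ∀ x, 0 ≤ f x) (hfi : Integrable f volume) (hf1 : ∫ x, f x = 1)

include hf hfi in
lemma q_nonneg (k : Fin d → ℤ) : 0 ≤ q f k :=
  setIntegral_nonneg (measurableSet_cubicCell 1 k) fun x _ => hf x

include hf hfi hf1 in
lemma q_le_one (k : Fin d → ℤ) : q f k ≤ 1 := by
  rw [← hf1]
  exact setIntegral_le_integral hfi (Filter.Eventually.of_forall hf)

include hf hfi in
lemma Q_nonneg (k : Fin d → ℤ) : 0 ≤ Q f k :=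
  setIntegral_nonneg (measurableSet_bigCell k) fun x _ => hf x

include hf hfi hf1 in
lemma Q_le_one (k : Fin d → ℤ) : Q f k ≤ 1 := by
  rw [← hf1]
  exact setIntegral_le_integral hfi (Filter.Eventually.of_forall hf)

lemma shift_injective (k : Fin d → ℤ) : Function.Injective
    (fun σ : Fin d → Bool => (fun j => k j + if σ j then 1 else 0 : Fin d → ℤ)) := by
  intro σ σ' hσ
  funext j
  have := congrFun hσ j
  simp only [add_right_inj] at this
  rcases hb : σ j <;> rcases hb' : σ' j <;> simp [hb, hb'] at this ⊢

include hfi in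
lemma Q_eq_sum (k : Fin d → ℤ) :
    Q f k = ∑ σ : Fin d → Bool, q f (fun j => k j + if σ j then 1 else 0) := by
  rw [Q, show bigCell k = ⋃ σ ∈ Finset.univ,
      cubicCell 1 (fun j => k j + if (σ : Fin d → Bool) j then 1 else 0) by
    rw [bigCell_eq_iUnion]; simp]
  rw [integral_biUnion_finset]
  · rfl
  · exact fun σ _ => measurableSet_cubicCell _ _
  · intro σ _ σ' _ hσ
    exact pairwise_disjoint_cubicCell one_pos (fun h => hσ (shift_injective k h))
  · exact fun σ _ => hfi.integrableOn

include hf hfi hf1 in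
lemma R_nonneg (k : Fin d → ℤ) : 0 ≤ R f k := by
  apply Finset.sum_nonneg
  intro σ _
  have h0 := q_nonneg hf hfi (f := f) (fun j => k j + if σ j then 1 else 0)
  have h1 := q_le_one hf hfi hf1 (f := f) (fun j => k j + if σ j then 1 else 0)
  have := Real.negMulLog_nonneg h0 h1
  have hc : 0 ≤ cst d := by
    unfold cst
    positivity
  nlinarith

include hf hfi hf1 in
lemma negMulLog_Q_add_le_R (k : Fin d → ℤ) :
    Real.negMulLog (Q f k) + cst d * Q f k ≤ R f k := by
  rw [Q_eq_sum hfi, R, Finset.mul_sum, Finset.sum_add_distrib]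
  apply add_le_add ?_ le_rfl
  exact negMulLog_sum_le _ _ fun σ _ => q_nonneg hf hfi _

end Group
end Csi

namespace Csi
variable {d : ℕ}
section Group2
variable {f : (Fin d → ℝ) → ℝ}
variable (hf : ∀ x, 0 ≤ f x) (hfi : Integrable f volume) (hf1 : ∫ x, f x = 1)

include hf hfi hf1 in
/-- The key group estimate: the `φp`-sum over any finite set of `h`-cells anchored at the
integer cell `k` is bounded by `R f k`. -/
lemma groupBound {h : ℝ} (hh : 0 < h) (hh1 : h ≤ 1) (k : Fin d → ℤ)
    (t : Finset (Fin d → ℤ)) (ht : ∀ i ∈ t, anchor h i = k) :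
    ∑ i ∈ t, h ^ d * φp (cellAvg f h i) ≤ R f k := by
  have hQ0 : 0 ≤ Q f k := Q_nonneg hf hfi k
  have hQ1 : Q f k ≤ 1 := Q_le_one hf hfi hf1 k
  have hcstnn : (0:ℝ) ≤ cst d := by unfold cst; positivity
  have hRfin : Real.negMulLog (Q f k) + cst d * Q f k ≤ R f k :=
    negMulLog_Q_add_le_R hf hfi hf1 k
  have hQR : 0 ≤ Real.negMulLog (Q f k) := Real.negMulLog_nonneg hQ0 hQ1
  rcases t.eq_empty_or_nonempty with rfl | htne
  · simpa using R_nonneg hf hfi hf1 k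
  have hpow : (0:ℝ) < h ^ d := by positivity
  have hcellsub : ∀ i ∈ t, cubicCell h i ⊆ bigCell k := by
    intro i hi
    rw [← ht i hi]
    exact cubicCell_subset_bigCell hh hh1 i
  have hdisj : (t : Set (Fin d → ℤ)).PairwiseDisjoint (cubicCell h) :=
    fun i _ j _ hij => pairwise_disjoint_cubicCell hh hij
  have hsub : (⋃ i ∈ t, cubicCell h i) ⊆ bigCell k := by
    simp only [Set.iUnion_subset_iff]
    exact hcellsub
  have hm_meas : volume (⋃ i ∈ t, cubicCell h i)
      = (t.card : ℝ≥0∞) * ENNReal.ofReal h ^ d := by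
    rw [measure_biUnion_finset hdisj fun i _ => measurableSet_cubicCell h i]
    simp [volume_cubicCell, Finset.sum_const, nsmul_eq_mul]
  have hm2 : (t.card : ℝ) * h ^ d ≤ 2 ^ d := by
    have hle : (t.card : ℝ≥0∞) * ENNReal.ofReal h ^ d ≤ ENNReal.ofReal 2 ^ d := by
      rw [← hm_meas, ← volume_bigCell k]
      exact measure_mono hsub
    have := ENNReal.toReal_mono (by simp [ENNReal.pow_ne_top]) hle
    simpa [ENNReal.toReal_mul, ENNReal.toReal_pow, ENNReal.toReal_ofReal hh.le,
      ENNReal.toReal_ofReal (by norm_num : (0:ℝ) ≤ 2)] using this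
  set m := (t.card : ℝ) * h ^ d with hm
  have hcard0 : (0:ℝ) < (t.card : ℝ) := by
    exact_mod_cast Finset.card_pos.2 htne
  have hm0 : (0:ℝ) < m := by positivity
  set p := fun i : Fin d → ℤ => ∫ x in cubicCell h i, f x with hp
  have hp0 : ∀ i, 0 ≤ p i :=
    fun i => setIntegral_nonneg (measurableSet_cubicCell h i) fun x _ => hf x
  have hsum_p : ∑ i ∈ t, p i ≤ Q f k := by
    have : ∑ i ∈ t, p i = ∫ x in ⋃ i ∈ t, cubicCell h i, f x :=
      (integral_biUnion_finset t (fun i _ => measurableSet_cubicCell h i)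
        hdisj (fun i _ => hfi.integrableOn)).symm
    rw [this, Q]
    exact setIntegral_mono_set hfi.integrableOn
      (Filter.Eventually.of_forall hf) (HasSubset.Subset.eventuallyLE hsub)
  set xv := fun i : Fin d → ℤ => min (cellAvg f h i) 1 with hxv
  have hxv0 : ∀ i, 0 ≤ xv i := fun i => le_min (cellAvg_nonneg hf hh.le i) zero_le_one
  set s' := ∑ i ∈ t, h ^ d * xv i with hs'
  have hs'0 : 0 ≤ s' := Finset.sum_nonneg fun i _ => mul_nonneg hpow.le (hxv0 i)
  have hs'Q : s' ≤ Q f k := by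
    refine le_trans (Finset.sum_le_sum fun i _ => ?_) hsum_p
    have h1 : xv i ≤ cellAvg f h i := min_le_left _ _
    have : h ^ d * xv i ≤ h ^ d * cellAvg f h i := by
      exact mul_le_mul_of_nonneg_left h1 hpow.le
    refine this.trans ?_
    rw [cellAvg]
    rw [mul_div_cancel₀ _ hpow.ne']
  by_cases hQ : Q f k ≤ Real.exp (-1)
  · -- Jensen route
    have hw : ∑ _i ∈ t, (h ^ d / m) = 1 := by
      rw [Finset.sum_const, nsmul_eq_mul, hm]
      field_simp
    have jensen : ∑ i ∈ t, (h ^ d / m) • Real.negMulLog (xv i) ≤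
        Real.negMulLog (∑ i ∈ t, (h ^ d / m) • xv i) :=
      Real.concaveOn_negMulLog.le_map_sum (fun i _ => by positivity) hw (fun i _ => hxv0 i)
    have hsum_w_xv : ∑ i ∈ t, (h ^ d / m) • xv i = s' / m := by
      rw [hs', Finset.sum_div]
      congr 1
      funext i
      rw [smul_eq_mul]
      ring
    have step1 : ∑ i ∈ t, h ^ d * φp (cellAvg f h i)
        = m * ∑ i ∈ t, (h ^ d / m) • Real.negMulLog (xv i) := by
      rw [Finset.mul_sum]
      congr 1
      funext i
      rw [smul_eq_mul, φp]
      field_simp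
      rfl
    have step2 : m * ∑ i ∈ t, (h ^ d / m) • Real.negMulLog (xv i)
        ≤ m * Real.negMulLog (s' / m) := by
      rw [← hsum_w_xv]
      exact mul_le_mul_of_nonneg_left jensen hm0.le
    have step3 : m * Real.negMulLog (s' / m) = Real.negMulLog s' + s' * Real.log m :=
      mul_negMulLog_div hm0
    have mono : Real.negMulLog s' ≤ Real.negMulLog (Q f k) :=
      negMulLog_monoOn ⟨hs'0, hs'Q.trans hQ⟩ ⟨hQ0, hQ⟩ hs'Q
    have hlogm : Real.log m ≤ d * Real.log 2 := by
      calc Real.log m ≤ Real.log (2 ^ d) := Real.log_le_log hm0 hm2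
        _ = d * Real.log 2 := by rw [Real.log_pow]
    have hdl2 : (0:ℝ) ≤ d * Real.log 2 := by positivity
    have step4 : s' * Real.log m ≤ Q f k * cst d := by
      calc s' * Real.log m ≤ s' * (d * Real.log 2) :=
            mul_le_mul_of_nonneg_left hlogm hs'0
        _ ≤ Q f k * (d * Real.log 2) := mul_le_mul_of_nonneg_right hs'Q hdl2
        _ ≤ Q f k * cst d := by
            apply mul_le_mul_of_nonneg_left _ hQ0
            unfold cst
            nlinarith [Real.exp_pos 1, pow_pos (by norm_num : (0:ℝ) < 2) d]
    calc ∑ i ∈ t, h ^ d * φp (cellAvg f h i)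
        ≤ m * Real.negMulLog (s' / m) := step1 ▸ step2
      _ = Real.negMulLog s' + s' * Real.log m := step3
      _ ≤ Real.negMulLog (Q f k) + cst d * Q f k := by
          rw [mul_comm (cst d)]
          exact add_le_add mono step4
      _ ≤ R f k := hRfin
  · -- crude route
    push_neg at hQ
    have hexp : Real.exp 1 * Real.exp (-1) = 1 := by
      rw [← Real.exp_add]; norm_num
    calc ∑ i ∈ t, h ^ d * φp (cellAvg f h i)
        ≤ ∑ _i ∈ t, h ^ d * 1 := by
          refine Finset.sum_le_sum fun i _ => ?_
          exact mul_le_mul_of_nonneg_left (phip_le_one (cellAvg_nonneg hf hh.le i)) hpow.le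
      _ = m := by rw [Finset.sum_const, nsmul_eq_mul]; ring
      _ ≤ 2 ^ d := hm2
      _ ≤ 2 ^ d * Real.exp 1 * Q f k := by
          have key : 2 ^ d * Real.exp 1 * Real.exp (-1) ≤ 2 ^ d * Real.exp 1 * Q f k :=
            mul_le_mul_of_nonneg_left hQ.le (by positivity)
          calc (2:ℝ) ^ d = 2 ^ d * Real.exp 1 * Real.exp (-1) := by
                rw [mul_assoc, hexp, mul_one]
            _ ≤ 2 ^ d * Real.exp 1 * Q f k := key
      _ ≤ Real.negMulLog (Q f k) + cst d * Q f k := by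
          have : 2 ^ d * Real.exp 1 * Q f k ≤ cst d * Q f k := by
            apply mul_le_mul_of_nonneg_right _ hQ0
            unfold cst
            nlinarith [Real.log_nonneg (by norm_num : (1:ℝ) ≤ 2), Nat.cast_nonneg (α := ℝ) d]
          linarith
      _ ≤ R f k := hRfin

end Group2
end Csi

namespace Csi
variable {d : ℕ}
section Tail
variable {f : (Fin d → ℝ) → ℝ}
variable (hf : ∀ x, 0 ≤ f x) (hfi : Integrable f volume) (hf1 : ∫ x, f x = 1)

/-- shift summability -/
lemma summable_shift {g : (Fin d → ℤ) → ℝ} (hg : Summable g) (c : Fin d → ℤ) :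
    Summable (fun k : Fin d → ℤ => g (fun j => k j + c j)) := by
  have := (Equiv.addRight c).summable_iff.2 hg
  exact this

include hf hfi hf1 in
lemma summable_R (hq : Summable fun k => Real.negMulLog (q f k)) :
    Summable (R f) := by
  have hq2 : Summable (q f) := by
    have : HasSum (fun i : Fin d → ℤ => ∫ x in cubicCell 1 i, f x) (∫ x in Set.univ, f x) := by
      rw [← iUnion_cubicCell one_pos]
      exact hasSum_integral_iUnion (fun i => measurableSet_cubicCell 1 i)
        (pairwise_disjoint_cubicCell one_pos) (by rw [iUnion_cubicCell one_pos]; exact hfi.integrableOn)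
    exact this.summable
  unfold R
  apply summable_sum
  intro σ _
  exact (summable_shift hq _).add ((summable_shift hq2 _).mul_left (cst d))

include hf hfi hf1 in
/-- Partial sums of the `φp` cell quantities with anchors avoiding `S` are controlled by the
corresponding tail of `R`. -/
lemma sum_phip_le {h : ℝ} (hh : 0 < h) (hh1 : h ≤ 1) (S : Finset (Fin d → ℤ))
    (hR : Summable (R f)) (F : Finset (Fin d → ℤ)) (hF : ∀ i ∈ F, anchor h i ∉ S) :
    ∑ i ∈ F, h ^ d * φp (cellAvg f h i) ≤ ∑' k : {k : Fin d → ℤ // k ∉ S}, R f k := by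
  have hmaps : ∀ i ∈ F, anchor h i ∈ F.image (anchor h) := fun i hi => Finset.mem_image_of_mem _ hi
  rw [← Finset.sum_fiberwise_of_maps_to hmaps]
  have step1 : ∑ k ∈ F.image (anchor h), ∑ i ∈ F.filter (fun i => anchor h i = k),
      h ^ d * φp (cellAvg f h i) ≤ ∑ k ∈ F.image (anchor h), R f k := by
    apply Finset.sum_le_sum
    intro k _
    exact groupBound hf hfi hf1 hh hh1 k _ (fun i hi => (Finset.mem_filter.1 hi).2)
  refine step1.trans ?_
  have hsubP : ∀ k ∈ F.image (anchor h), k ∉ S := by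
    intro k hk
    rcases Finset.mem_image.1 hk with ⟨i, hi, rfl⟩
    exact hF i hi
  rw [← Finset.sum_subtype_of_mem (fun k => R f k) hsubP]
  exact Summable.sum_le_tsum _ (fun k _ => R_nonneg hf hfi hf1 k) (hR.subtype _)

include hf hfi hf1 in
lemma summable_phip {h : ℝ} (hh : 0 < h) (hh1 : h ≤ 1) (hR : Summable (R f)) :
    Summable (fun i : Fin d → ℤ => h ^ d * φp (cellAvg f h i)) := by
  apply summable_of_sum_le (fun i => mul_nonneg (by positivity) (phip_nonneg (cellAvg_nonneg hf hh.le i)))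
  intro F
  exact sum_phip_le hf hfi hf1 hh hh1 ∅ hR F (fun i _ => Finset.notMem_empty _)

include hf hfi hf1 in
lemma tsum_phip_tail_le {h : ℝ} (hh : 0 < h) (hh1 : h ≤ 1) (S : Finset (Fin d → ℤ))
    (hR : Summable (R f)) :
    ∑' i : {i : Fin d → ℤ // anchor h i ∉ S}, h ^ d * φp (cellAvg f h (i : Fin d → ℤ))
      ≤ ∑' k : {k : Fin d → ℤ // k ∉ S}, R f k := by
  apply Summable.tsum_le_of_sum_le ((summable_phip hf hfi hf1 hh hh1 hR).subtype _)
  intro F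
  refine le_trans (le_of_eq (Finset.sum_map F (Function.Embedding.subtype _)
      (fun i : Fin d → ℤ => h ^ d * φp (cellAvg f h i))).symm) ?_
  exact sum_phip_le hf hfi hf1 hh hh1 S hR _ (by
    intro i hi
    rcases Finset.mem_map.1 hi with ⟨j, _, rfl⟩
    exact j.2)

include hf hfi hf1 in
lemma exists_tail_small (hR : Summable (R f)) {ε : ℝ} (hε : 0 < ε) :
    ∃ S : Finset (Fin d → ℤ), ∑' k : {k : Fin d → ℤ // k ∉ S}, R f k < ε := by
  have := tendsto_tsum_compl_atTop_zero (R f)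
  exact ((this.eventually (gt_mem_nhds hε)).exists)

end Tail
end Csi

namespace Csi
variable {d : ℕ}

lemma entTerm_eq {t : ℝ} (ht : 0 ≤ t) : entTerm t = Real.negMulLog t / Real.log 2 := by
  rcases eq_or_lt_of_le ht with h0 | h0
  · simp [entTerm, Real.negMulLog, ← h0]
  · rw [entTerm, Real.logb, one_div, Real.log_inv, Real.negMulLog]
    ring

section Sums
variable {f : (Fin d → ℝ) → ℝ}

/-- series of `φp`-masses -/
noncomputable def Pq (f : (Fin d → ℝ) → ℝ) (h : ℝ) : ℝ :=
  ∑' i : Fin d → ℤ, h ^ d * φp (cellAvg f h i)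

/-- series of `φm`-masses -/
noncomputable def Mq (f : (Fin d → ℝ) → ℝ) (h : ℝ) : ℝ :=
  ∑' i : Fin d → ℤ, h ^ d * φm (cellAvg f h i)

variable (hf : ∀ x, 0 ≤ f x) (hfm : Measurable f) (hfi : Integrable f volume)
  (hf1 : ∫ x, f x = 1) (hgi : Integrable (fun x => Real.negMulLog (f x)) volume)

include hf hfm hgi in
lemma integrable_phim_f : Integrable (fun x => φm (f x)) volume := by
  apply Integrable.mono' hgi.abs (continuous_phim.measurable.comp hfm).aestronglyMeasurable
  filter_upwards with x
  show |φm (f x)| ≤ |Real.negMulLog (f x)|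
  rw [abs_of_nonneg (phim_nonneg _)]
  exact phim_le_abs (hf x)

include hf hfm hgi in
lemma integrable_phip_f : Integrable (fun x => φp (f x)) volume := by
  apply Integrable.mono' hgi.abs (continuous_phip.measurable.comp hfm).aestronglyMeasurable
  filter_upwards with x
  show |φp (f x)| ≤ |Real.negMulLog (f x)|
  rw [abs_of_nonneg (phip_nonneg (hf x))]
  exact phip_le_abs (hf x)

/-- cell decomposition of the integral of an integrable function -/
lemma hasSum_cells {g : (Fin d → ℝ) → ℝ} (hgint : Integrable g volume) {h : ℝ} (hh : 0 < h) :
    HasSum (fun i : Fin d → ℤ => ∫ x in cubicCell h i, g x) (∫ x, g x) := by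
  have : HasSum (fun i : Fin d → ℤ => ∫ x in cubicCell h i, g x)
      (∫ x in ⋃ i : Fin d → ℤ, cubicCell h i, g x) :=
    hasSum_integral_iUnion (fun i => measurableSet_cubicCell h i)
      (pairwise_disjoint_cubicCell hh)
      (by rw [iUnion_cubicCell hh]; exact hgint.integrableOn)
  rwa [iUnion_cubicCell hh, setIntegral_univ] at this

include hf hfm hfi hgi in
lemma sum_phim_le {h : ℝ} (hh : 0 < h) (F : Finset (Fin d → ℤ)) :
    ∑ i ∈ F, h ^ d * φm (cellAvg f h i) ≤ ∫ x, φm (f x) := by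
  have hjen : ∀ i ∈ F, h ^ d * φm (cellAvg f h i) ≤ ∫ x in cubicCell h i, φm (f x) :=
    fun i _ => cell_jensen_convex hh hf hfi (integrable_phim_f hf hfm hgi) i
  refine (Finset.sum_le_sum hjen).trans ?_
  rw [← integral_biUnion_finset F (fun i _ => measurableSet_cubicCell h i)
    (fun i _ j _ hij => pairwise_disjoint_cubicCell hh hij)
    (fun i _ => (integrable_phim_f hf hfm hgi).integrableOn)]
  exact setIntegral_le_integral (integrable_phim_f hf hfm hgi)
    (Filter.Eventually.of_forall fun x => phim_nonneg _)

include hf hfm hfi hgi in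
lemma summable_phim {h : ℝ} (hh : 0 < h) :
    Summable (fun i : Fin d → ℤ => h ^ d * φm (cellAvg f h i)) := by
  apply summable_of_sum_le
    (fun i => mul_nonneg (by positivity) (phim_nonneg _))
  intro F
  exact sum_phim_le hf hfm hfi hgi hh F

include hf hfm hfi hgi in
lemma Mq_le {h : ℝ} (hh : 0 < h) : Mq f h ≤ ∫ x, φm (f x) := by
  exact Summable.tsum_le_of_sum_le (summable_phim hf hfm hfi hgi hh)
    (fun F => sum_phim_le hf hfm hfi hgi hh F)

include hf hfm hfi hgi in
lemma Mq_nonneg {h : ℝ} (hh : 0 < h) : 0 ≤ Mq f h :=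
  tsum_nonneg fun i => mul_nonneg (by positivity) (phim_nonneg _)

include hf hfi hf1 in
lemma Pq_nonneg {h : ℝ} (hh : 0 < h) : 0 ≤ Pq f h :=
  tsum_nonneg fun i => mul_nonneg (by positivity) (phip_nonneg (cellAvg_nonneg hf hh.le i))

include hf hfm hfi hf1 hgi in
/-- Jensen's inequality, global form: differential entropy is at most any normalized
partition entropy. -/
lemma jensen_lower {h : ℝ} (hh : 0 < h) (hh1 : h ≤ 1) (hR : Summable (R f)) :
    ∫ x, Real.negMulLog (f x) ≤ Pq f h - Mq f h := by
  have h1 : HasSum (fun i : Fin d → ℤ => ∫ x in cubicCell h i, Real.negMulLog (f x))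
      (∫ x, Real.negMulLog (f x)) := hasSum_cells hgi hh
  have hsub : Summable (fun i : Fin d → ℤ =>
      h ^ d * φp (cellAvg f h i) - h ^ d * φm (cellAvg f h i)) :=
    (summable_phip hf hfi hf1 hh hh1 hR).sub (summable_phim hf hfm hfi hgi hh)
  have key : ∀ i : Fin d → ℤ, ∫ x in cubicCell h i, Real.negMulLog (f x)
      ≤ h ^ d * φp (cellAvg f h i) - h ^ d * φm (cellAvg f h i) := by
    intro i
    have := cell_jensen_concave hh hf hfi hgi i
    rwa [negMulLog_eq_phi (cellAvg_nonneg hf hh.le i), mul_sub] at this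
  calc ∫ x, Real.negMulLog (f x) = ∑' i : Fin d → ℤ, ∫ x in cubicCell h i, Real.negMulLog (f x) :=
        h1.tsum_eq.symm
    _ ≤ ∑' i : Fin d → ℤ, (h ^ d * φp (cellAvg f h i) - h ^ d * φm (cellAvg f h i)) :=
        Summable.tsum_le_tsum key h1.summable hsub
    _ = Pq f h - Mq f h := by
        rw [Summable.tsum_sub (summable_phip hf hfi hf1 hh hh1 hR) (summable_phim hf hfm hfi hgi hh)]
        rfl

include hf hfm hfi hf1 hgi in
/-- The central identity: the normalized partition entropy equals `(Pq - Mq)/log 2`. -/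
lemma sum_identity {h : ℝ} (hh : 0 < h) (hh1 : h ≤ 1) (hR : Summable (R f)) :
    (∑' i : Fin d → ℤ, entTerm (∫ x in cubicCell h i, f x)) - d * Real.logb 2 (1 / h)
      = (Pq f h - Mq f h) / Real.log 2 := by
  have hpow : (0:ℝ) < h ^ d := by positivity
  set p := fun i : Fin d → ℤ => ∫ x in cubicCell h i, f x with hp
  have hp0 : ∀ i, 0 ≤ p i :=
    fun i => setIntegral_nonneg (measurableSet_cubicCell h i) fun x _ => hf x
  have hp1 : HasSum p 1 := hf1 ▸ hasSum_cells hfi hh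
  have hsubtr : Summable (fun i : Fin d → ℤ =>
      (h ^ d * φp (cellAvg f h i) - h ^ d * φm (cellAvg f h i)) - p i * (d * Real.log h)) :=
    ((summable_phip hf hfi hf1 hh hh1 hR).sub (summable_phim hf hfm hfi hgi hh)).sub
      (hp1.summable.mul_right _)
  have key : ∀ i : Fin d → ℤ, Real.negMulLog (p i) =
      (h ^ d * φp (cellAvg f h i) - h ^ d * φm (cellAvg f h i)) - p i * (d * Real.log h) := by
    intro i
    have h2 : h ^ d * Real.negMulLog (p i / h ^ d) = Real.negMulLog (p i) + p i * Real.log (h ^ d) :=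
      mul_negMulLog_div hpow
    have h3 : cellAvg f h i = p i / h ^ d := rfl
    have h4 : h ^ d * φp (cellAvg f h i) - h ^ d * φm (cellAvg f h i)
        = h ^ d * Real.negMulLog (cellAvg f h i) := by
      rw [← mul_sub, ← negMulLog_eq_phi (cellAvg_nonneg hf hh.le i)]
    rw [h4, h3, h2, Real.log_pow]
    ring
  have hsumneg : Summable (fun i => Real.negMulLog (p i)) := by
    apply Summable.congr hsubtr
    intro i
    exact (key i).symm
  have htsum : ∑' i, Real.negMulLog (p i) = (Pq f h - Mq f h) - d * Real.log h := by
    calc ∑' i, Real.negMulLog (p i)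
        = ∑' i, ((h ^ d * φp (cellAvg f h i) - h ^ d * φm (cellAvg f h i))
            - p i * (d * Real.log h)) := tsum_congr key
      _ = (Pq f h - Mq f h) - d * Real.log h := by
          rw [Summable.tsum_sub ((summable_phip hf hfi hf1 hh hh1 hR).sub
              (summable_phim hf hfm hfi hgi hh)) (hp1.summable.mul_right _),
            Summable.tsum_sub (summable_phip hf hfi hf1 hh hh1 hR) (summable_phim hf hfm hfi hgi hh),
            tsum_mul_right, hp1.tsum_eq]
          rw [Pq, Mq]
          ring
  have hent : ∀ i, entTerm (p i) = Real.negMulLog (p i) / Real.log 2 :=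
    fun i => entTerm_eq (hp0 i)
  rw [tsum_congr hent, tsum_div_const, htsum]
  rw [one_div, Real.logb, Real.log_inv]
  ring

end Sums
end Csi

namespace Csi
variable {d : ℕ}
section Bridge
variable {f : (Fin d → ℝ) → ℝ}
variable (hf : ∀ x, 0 ≤ f x) (hfm : Measurable f) (hfi : Integrable f volume)
  (hf1 : ∫ x, f x = 1) (hgi : Integrable (fun x => Real.negMulLog (f x)) volume)

lemma ofReal_cell_term {h : ℝ} (hh : 0 < h) (g : ℝ → ℝ) (i : Fin d → ℤ) (hg : 0 ≤ g (cellAvg f h i)) :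
    ENNReal.ofReal (g (cellAvg f h i)) * ENNReal.ofReal h ^ d
      = ENNReal.ofReal (h ^ d * g (cellAvg f h i)) := by
  rw [← ENNReal.ofReal_pow hh.le, ← ENNReal.ofReal_mul (by positivity), mul_comm]

include hf hfi hf1 in
lemma lint_phip_eq {h : ℝ} (hh : 0 < h) (hh1 : h ≤ 1) (hR : Summable (R f)) :
    ∫⁻ x, ENNReal.ofReal (φp (gridAvg f h x)) = ENNReal.ofReal (Pq f h) := by
  rw [lintegral_comp_gridAvg φp hh, Pq, ENNReal.ofReal_tsum_of_nonneg
    (fun i => mul_nonneg (by positivity) (phip_nonneg (cellAvg_nonneg hf hh.le i)))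
    (summable_phip hf hfi hf1 hh hh1 hR)]
  exact tsum_congr fun i =>
    ofReal_cell_term hh φp i (phip_nonneg (cellAvg_nonneg hf hh.le i))

include hf hfm hfi hgi in
lemma lint_phim_eq {h : ℝ} (hh : 0 < h) :
    ∫⁻ x, ENNReal.ofReal (φm (gridAvg f h x)) = ENNReal.ofReal (Mq f h) := by
  rw [lintegral_comp_gridAvg φm hh, Mq, ENNReal.ofReal_tsum_of_nonneg
    (fun i => mul_nonneg (by positivity) (phim_nonneg _))
    (summable_phim hf hfm hfi hgi hh)]
  exact tsum_congr fun i => ofReal_cell_term hh φm i (phim_nonneg _)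

/-- the bounded region associated with a finite set of unit cells -/
def BS (S : Finset (Fin d → ℤ)) : Set (Fin d → ℝ) := ⋃ k ∈ S, bigCell k

lemma measurableSet_BS (S : Finset (Fin d → ℤ)) : MeasurableSet (BS S) :=
  MeasurableSet.biUnion S.countable_toSet fun k _ => measurableSet_bigCell k

lemma volume_BS_lt_top (S : Finset (Fin d → ℤ)) : volume (BS S) < ⊤ := by
  refine lt_of_le_of_lt (measure_biUnion_finset_le S bigCell) ?_
  apply ENNReal.sum_lt_top.2
  intro k _
  rw [volume_bigCell]
  exact ENNReal.pow_lt_top ENNReal.ofReal_lt_top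

include hf hfi hf1 in
lemma lint_phip_tail {h : ℝ} (hh : 0 < h) (hh1 : h ≤ 1) (S : Finset (Fin d → ℤ))
    (hR : Summable (R f)) :
    ∫⁻ x, ENNReal.ofReal (φp (gridAvg f h x)) ≤
      (∫⁻ x in BS S, ENNReal.ofReal (φp (gridAvg f h x)))
        + ENNReal.ofReal (∑' k : {k : Fin d → ℤ // k ∉ S}, R f k) := by
  rw [lintegral_comp_gridAvg φp hh]
  set s : Set (Fin d → ℤ) := {i | anchor h i ∈ S} with hs
  rw [← Summable.tsum_add_tsum_compl (s := s)
    (f := fun i => ENNReal.ofReal (φp (cellAvg f h i)) * ENNReal.ofReal h ^ d)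
    ENNReal.summable ENNReal.summable]
  gcongr
  · -- inner part is a set integral over the union of the cells, inside BS S
    have hdisj : Pairwise (Function.onFun Disjoint fun i : s => cubicCell h (i : Fin d → ℤ)) :=
      fun i j hij => pairwise_disjoint_cubicCell hh (Subtype.val_injective.ne hij)
    have := lintegral_iUnion (fun i : s => measurableSet_cubicCell h (i : Fin d → ℤ)) hdisj
      (fun x => ENNReal.ofReal (φp (gridAvg f h x))) (μ := volume)
    have hcongr : ∀ i : s, ∫⁻ x in cubicCell h (i : Fin d → ℤ), ENNReal.ofReal (φp (gridAvg f h x))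
        = ENNReal.ofReal (φp (cellAvg f h (i : Fin d → ℤ))) * ENNReal.ofReal h ^ d := by
      intro i
      rw [show ∫⁻ x in cubicCell h (i : Fin d → ℤ), ENNReal.ofReal (φp (gridAvg f h x)) =
          ∫⁻ _ in cubicCell h (i : Fin d → ℤ), ENNReal.ofReal (φp (cellAvg f h (i : Fin d → ℤ))) from
        setLIntegral_congr_fun (measurableSet_cubicCell h _)
          (fun x hx => by rw [gridAvg_eq_on_cell hh hx]),
        setLIntegral_const, volume_cubicCell]
    calc ∑' i : s, ENNReal.ofReal (φp (cellAvg f h (i : Fin d → ℤ))) * ENNReal.ofReal h ^ d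
        = ∫⁻ x in ⋃ i : s, cubicCell h (i : Fin d → ℤ), ENNReal.ofReal (φp (gridAvg f h x)) := by
          rw [this]
          exact (tsum_congr hcongr).symm
      _ ≤ ∫⁻ x in BS S, ENNReal.ofReal (φp (gridAvg f h x)) := by
          apply lintegral_mono_set
          apply Set.iUnion_subset
          intro i
          refine (cubicCell_subset_bigCell hh hh1 _).trans ?_
          exact Set.subset_biUnion_of_mem (i.2 : anchor h (i : Fin d → ℤ) ∈ S)
  · -- tail part
    have hnn : ∀ i : ↥sᶜ, 0 ≤ h ^ d * φp (cellAvg f h (i : Fin d → ℤ)) :=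
      fun i => mul_nonneg (by positivity) (phip_nonneg (cellAvg_nonneg hf hh.le _))
    have hsummable : Summable (fun i : ↥sᶜ => h ^ d * φp (cellAvg f h (i : Fin d → ℤ))) :=
      (summable_phip hf hfi hf1 hh hh1 hR).subtype _
    calc ∑' i : ↥sᶜ, ENNReal.ofReal (φp (cellAvg f h (i : Fin d → ℤ))) * ENNReal.ofReal h ^ d
        = ∑' i : ↥sᶜ, ENNReal.ofReal (h ^ d * φp (cellAvg f h (i : Fin d → ℤ))) :=
          tsum_congr fun i => ofReal_cell_term hh φp _ (phip_nonneg (cellAvg_nonneg hf hh.le _))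
      _ = ENNReal.ofReal (∑' i : ↥sᶜ, h ^ d * φp (cellAvg f h (i : Fin d → ℤ))) :=
          (ENNReal.ofReal_tsum_of_nonneg hnn hsummable).symm
      _ ≤ ENNReal.ofReal (∑' k : {k : Fin d → ℤ // k ∉ S}, R f k) := by
          apply ENNReal.ofReal_le_ofReal
          let equiv : ↥sᶜ ≃ {i : Fin d → ℤ // anchor h i ∉ S} :=
            Equiv.subtypeEquivRight (fun i => by simp [hs])
          have he : ∑' (i : ↥sᶜ), h ^ d * φp (cellAvg f h (i : Fin d → ℤ))
              = ∑' (b : { i : Fin d → ℤ // anchor h i ∉ S }), h ^ d * φp (cellAvg f h (b : Fin d → ℤ)) :=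
            by
              rw [← Equiv.tsum_eq equiv (fun b : { i : Fin d → ℤ // anchor h i ∉ S } =>
                h ^ d * φp (cellAvg f h (b : Fin d → ℤ)))]
              exact tsum_congr fun c => rfl
          rw [he]
          exact tsum_phip_tail_le hf hfi hf1 hh hh1 S hR

end Bridge
end Csi

namespace Csi
variable {d : ℕ}
section Main
variable {f : (Fin d → ℝ) → ℝ}
variable (hf : ∀ x, 0 ≤ f x) (hfm : Measurable f) (hfi : Integrable f volume)
  (hf1 : ∫ x, f x = 1) (hgi : Integrable (fun x => Real.negMulLog (f x)) volume)

include hf hfm hfi hf1 hgi in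
lemma seq_tendsto (hR : Summable (R f)) (u : ℕ → ℝ) (hu1 : ∀ n, 0 < u n) (hu2 : ∀ n, u n ≤ 1)
    (hu0 : Filter.Tendsto u Filter.atTop (nhds 0)) :
    Filter.Tendsto (fun n => Pq f (u n) - Mq f (u n)) Filter.atTop
      (nhds (∫ x, Real.negMulLog (f x))) := by
  set L := ∫ x, Real.negMulLog (f x) with hL
  have hphipint := integrable_phip_f hf hfm hgi
  have hphimint := integrable_phim_f hf hfm hgi
  have hLsplit : L = (∫ x, φp (f x)) - ∫ x, φm (f x) := by
    rw [hL, ← integral_sub hphipint hphimint]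
    exact integral_congr_ae (Filter.Eventually.of_forall fun x => negMulLog_eq_phi (hf x))
  have hlow : ∀ n, L ≤ Pq f (u n) - Mq f (u n) :=
    fun n => jensen_lower hf hfm hfi hf1 hgi (hu1 n) (hu2 n) hR
  have hae := ae_tendsto_gridAvg hfi hu1 hu0
  rw [Metric.tendsto_nhds]
  intro ε hε
  -- tail set choice
  obtain ⟨S, hS⟩ := exists_tail_small hf hfi hf1 hR (by positivity : (0:ℝ) < ε/4)
  have htail0 : 0 ≤ ∑' k : {k : Fin d → ℤ // k ∉ S}, R f k :=
    tsum_nonneg fun k => R_nonneg hf hfi hf1 _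
  -- `φp` DCT on the box `BS S`
  haveI : IsFiniteMeasure (volume.restrict (BS S)) := by
    constructor
    rw [Measure.restrict_apply_univ]
    exact volume_BS_lt_top S
  have hdct : Filter.Tendsto (fun n => ∫ x in BS S, φp (gridAvg f (u n) x)) Filter.atTop
      (nhds (∫ x in BS S, φp (f x))) := by
    apply tendsto_integral_of_dominated_convergence (fun _ => (1:ℝ))
      (fun n => (measurable_comp_gridAvg φp (u n)).aestronglyMeasurable)
      (integrable_const 1)
    · intro n
      apply Filter.Eventually.of_forall
      intro x
      rw [Real.norm_eq_abs, abs_of_nonneg (phip_nonneg (gridAvg_nonneg hf (hu1 n).le x))]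
      exact phip_le_one (gridAvg_nonneg hf (hu1 n).le x)
    · apply ae_restrict_of_ae
      filter_upwards [hae] with x hx
      exact (continuous_phip.tendsto _).comp hx
  have hboxle : ∫ x in BS S, φp (f x) ≤ ∫ x, φp (f x) :=
    setIntegral_le_integral hphipint (Filter.Eventually.of_forall fun x => phip_nonneg (hf x))
  have hPq_ev : ∀ᶠ n in Filter.atTop, Pq f (u n) ≤ (∫ x, φp (f x)) + ε/4 + ε/4 := by
    filter_upwards [hdct.eventually (gt_mem_nhds (lt_add_of_pos_right _
      (by positivity : (0:ℝ) < ε/4)))] with n hn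
    -- Pq (u n) ≤ ∫_BS φp grid + tail
    have hgridint : Integrable (fun x => φp (gridAvg f (u n) x)) (volume.restrict (BS S)) := by
      apply Integrable.mono' (integrable_const (1:ℝ))
        (measurable_comp_gridAvg φp (u n)).aestronglyMeasurable
      apply Filter.Eventually.of_forall
      intro x
      rw [Real.norm_eq_abs, abs_of_nonneg (phip_nonneg (gridAvg_nonneg hf (hu1 n).le x))]
      exact phip_le_one (gridAvg_nonneg hf (hu1 n).le x)
    have hkey : ENNReal.ofReal (Pq f (u n)) ≤
        ENNReal.ofReal ((∫ x in BS S, φp (gridAvg f (u n) x)) +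
          ∑' k : {k : Fin d → ℤ // k ∉ S}, R f k) := by
      rw [← lint_phip_eq hf hfi hf1 (hu1 n) (hu2 n) hR]
      refine (lint_phip_tail hf hfi hf1 (hu1 n) (hu2 n) S hR).trans (le_of_eq ?_)
      rw [ENNReal.ofReal_add (setIntegral_nonneg (measurableSet_BS S)
        (fun x _ => phip_nonneg (gridAvg_nonneg hf (hu1 n).le x))) htail0]
      congr 1
      rw [← ofReal_integral_eq_lintegral_ofReal hgridint
        (Filter.Eventually.of_forall fun x => phip_nonneg (gridAvg_nonneg hf (hu1 n).le x))]
    have h2 : Pq f (u n) ≤ (∫ x in BS S, φp (gridAvg f (u n) x)) +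
        ∑' k : {k : Fin d → ℤ // k ∉ S}, R f k := by
      have hrhs : 0 ≤ (∫ x in BS S, φp (gridAvg f (u n) x)) +
          ∑' k : {k : Fin d → ℤ // k ∉ S}, R f k :=
        add_nonneg (setIntegral_nonneg (measurableSet_BS S)
          (fun x _ => phip_nonneg (gridAvg_nonneg hf (hu1 n).le x))) htail0
      exact (ENNReal.ofReal_le_ofReal_iff hrhs).1 hkey
    calc Pq f (u n) ≤ (∫ x in BS S, φp (gridAvg f (u n) x)) +
          ∑' k : {k : Fin d → ℤ // k ∉ S}, R f k := h2
      _ ≤ ((∫ x in BS S, φp (f x)) + ε/4) + ε/4 := add_le_add hn.le hS.le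
      _ ≤ (∫ x, φp (f x)) + ε/4 + ε/4 := by linarith [hboxle]
  -- `φm` Fatou
  have hMq_ev : ∀ᶠ n in Filter.atTop, (∫ x, φm (f x)) - ε/4 ≤ Mq f (u n) := by
    set I := ∫ x, φm (f x) with hI
    have hI0 : 0 ≤ I := integral_nonneg fun x => phim_nonneg _
    by_cases hIε : I ≤ ε/4
    · apply Filter.Eventually.of_forall
      intro n
      have := Mq_nonneg hf hfm hfi hgi (f := f) (hu1 n)
      linarith
    · push_neg at hIε
      have hfatou : ENNReal.ofReal I ≤ Filter.liminf
          (fun n => ENNReal.ofReal (Mq f (u n))) Filter.atTop := by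
        have h1 : ENNReal.ofReal I = ∫⁻ x, ENNReal.ofReal (φm (f x)) :=
          ofReal_integral_eq_lintegral_ofReal hphimint
            (Filter.Eventually.of_forall fun x => phim_nonneg _)
        have h2 : ∫⁻ x, ENNReal.ofReal (φm (f x)) =
            ∫⁻ x, Filter.liminf (fun n => ENNReal.ofReal (φm (gridAvg f (u n) x))) Filter.atTop := by
          apply lintegral_congr_ae
          filter_upwards [hae] with x hx
          exact (((ENNReal.continuous_ofReal.tendsto _).comp
            ((continuous_phim.tendsto _).comp hx)).liminf_eq).symm
        have h3 := lintegral_liminf_le (μ := volume) (u := Filter.atTop)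
          (f := fun n (x : Fin d → ℝ) => ENNReal.ofReal (φm (gridAvg f (u n) x)))
          (fun n => ENNReal.measurable_ofReal.comp (measurable_comp_gridAvg φm (u n)))
        rw [h1, h2]
        refine h3.trans (le_of_eq ?_)
        apply Filter.liminf_congr
        apply Filter.Eventually.of_forall
        intro n
        rw [lint_phim_eq hf hfm hfi hgi (hu1 n)]
      have hlt : ENNReal.ofReal (I - ε/4) < ENNReal.ofReal I := by
        rw [ENNReal.ofReal_lt_ofReal_iff (by linarith)]
        linarith
      filter_upwards [Filter.eventually_lt_of_lt_liminf (lt_of_lt_of_le hlt hfatou)] with n hn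
      have := (ENNReal.ofReal_lt_ofReal_iff_of_nonneg (by linarith)).1 hn
      linarith
  filter_upwards [hPq_ev, hMq_ev] with n h1 h2
  rw [Real.dist_eq, abs_of_nonneg (by linarith [hlow n])]
  have : Pq f (u n) - Mq f (u n) ≤ L + 3 * (ε/4) := by
    rw [hLsplit]
    linarith
  linarith

end Main
end Csi

open Csi in
/-- Csiszár: if `X` is an `ℝ^d`-valued random vector with density `f`
satisfying Rényi's condition (the floor vector `(⌊X_1⌋,…,⌊X_d⌋)` — i.e. the unit cubic
partition — has finite Shannon entropy) and `f·log₂(1/f)` is Lebesgue integrable, then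
`𝔈_{𝒜*_h}(X) − d·log₂(1/h) → 𝔈(f)` as `h → 0⁺`. -/
theorem csiszar_cubic_partition_entropy_limit
    {Ω : Type} [MeasurableSpace Ω] (μ : Measure Ω) [IsProbabilityMeasure μ]
    {d : ℕ} (X : Ω → (Fin d → ℝ)) (hX : Measurable X)
    (f : (Fin d → ℝ) → ℝ) (hf_meas : Measurable f) (hf_nonneg : ∀ x, 0 ≤ f x)
    (hdensity : Measure.map X μ = volume.withDensity fun x => ENNReal.ofReal (f x))
    (hrenyi : Summable fun i : Fin d → ℤ => entTerm (μ (X ⁻¹' cubicCell 1 i)).toReal)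
    (hint : Integrable (fun x => f x * Real.logb 2 (1 / f x)) volume) :
    Filter.Tendsto
      (fun h : ℝ =>
        (∑' i : Fin d → ℤ, entTerm (μ (X ⁻¹' cubicCell h i)).toReal)
          - d * Real.logb 2 (1 / h))
      (nhdsWithin 0 (Set.Ioi 0))
      (nhds (∫ x, f x * Real.logb 2 (1 / f x))) := by
  classical
  have hl2 : (0:ℝ) < Real.log 2 := Real.log_pos (by norm_num)
  have hmeas_map : ∀ (A : Set (Fin d → ℝ)), MeasurableSet A →
      μ (X ⁻¹' A) = ∫⁻ x in A, ENNReal.ofReal (f x) := by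
    intro A hA
    rw [← Measure.map_apply hX hA, hdensity, withDensity_apply _ hA]
  have huniv : ∫⁻ x, ENNReal.ofReal (f x) = 1 := by
    have := hmeas_map Set.univ MeasurableSet.univ
    rw [Set.preimage_univ, measure_univ, setLIntegral_univ] at this
    exact this.symm
  have hfi : Integrable f volume := by
    refine ⟨hf_meas.aestronglyMeasurable, ?_⟩
    rw [hasFiniteIntegral_iff_ofReal (Filter.Eventually.of_forall hf_nonneg), huniv]
    exact ENNReal.one_lt_top
  have hf1 : ∫ x, f x = 1 := by
    rw [integral_eq_lintegral_of_nonneg_ae (Filter.Eventually.of_forall hf_nonneg)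
      hf_meas.aestronglyMeasurable, huniv]
    simp
  have hptoReal : ∀ (h : ℝ) (i : Fin d → ℤ),
      (μ (X ⁻¹' cubicCell h i)).toReal = ∫ x in cubicCell h i, f x := by
    intro h i
    rw [hmeas_map _ (measurableSet_cubicCell h i),
      integral_eq_lintegral_of_nonneg_ae
        (ae_restrict_of_ae (Filter.Eventually.of_forall hf_nonneg))
        hf_meas.aestronglyMeasurable.restrict]
  have hentpt : ∀ x : Fin d → ℝ, f x * Real.logb 2 (1 / f x)
      = Real.negMulLog (f x) / Real.log 2 :=
    fun x => entTerm_eq (hf_nonneg x)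
  have hgi : Integrable (fun x => Real.negMulLog (f x)) volume := by
    apply (hint.const_mul (Real.log 2)).congr
    apply Filter.Eventually.of_forall
    intro x
    show Real.log 2 * (f x * Real.logb 2 (1 / f x)) = Real.negMulLog (f x)
    rw [hentpt x]
    field_simp
  have hqS : Summable fun k : Fin d → ℤ => Real.negMulLog (Csi.q f k) := by
    apply (hrenyi.mul_left (Real.log 2)).congr
    intro k
    have h0 : entTerm ((μ (X ⁻¹' cubicCell 1 k)).toReal)
        = Real.negMulLog (Csi.q f k) / Real.log 2 := by
      rw [hptoReal 1 k]
      exact entTerm_eq (setIntegral_nonneg (measurableSet_cubicCell 1 k) fun x _ => hf_nonneg x)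
    rw [h0]
    field_simp
  have hR : Summable (R f) := summable_R hf_nonneg hfi hf1 hqS
  have htarget : ∫ x, f x * Real.logb 2 (1 / f x)
      = (∫ x, Real.negMulLog (f x)) / Real.log 2 := by
    rw [← integral_div]
    exact integral_congr_ae (Filter.Eventually.of_forall hentpt)
  have hcongr : (fun h : ℝ => (∑' i : Fin d → ℤ, entTerm (μ (X ⁻¹' cubicCell h i)).toReal)
          - d * Real.logb 2 (1 / h))
        =ᶠ[nhdsWithin 0 (Set.Ioi 0)] (fun h => (Pq f h - Mq f h) / Real.log 2) := by
    filter_upwards [Ioc_mem_nhdsGT_of_mem (Set.mem_Ico.2 ⟨le_rfl, one_pos⟩)] with h hh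
    rw [← sum_identity hf_nonneg hf_meas hfi hf1 hgi hh.1 hh.2 hR]
    congr 1
    exact tsum_congr fun i => by rw [hptoReal h i]
  have mainW : Filter.Tendsto (fun h => Pq f h - Mq f h) (nhdsWithin 0 (Set.Ioi 0))
      (nhds (∫ x, Real.negMulLog (f x))) := by
    rw [Filter.tendsto_iff_seq_tendsto]
    intro u hu
    have hu0 : Filter.Tendsto u Filter.atTop (nhds 0) := hu.mono_right nhdsWithin_le_nhds
    have hmem : ∀ᶠ n in Filter.atTop, u n ∈ Set.Ioc (0:ℝ) 1 :=
      hu.eventually (Filter.eventually_of_mem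
        (Ioc_mem_nhdsGT_of_mem (Set.mem_Ico.2 ⟨le_rfl, one_pos⟩)) fun _ hx => hx)
    set v := fun n => if u n ∈ Set.Ioc (0:ℝ) 1 then u n else 1 with hv
    have hv1 : ∀ n, 0 < v n := by
      intro n
      simp only [hv]
      split_ifs with hc
      · exact hc.1
      · exact one_pos
    have hv2 : ∀ n, v n ≤ 1 := by
      intro n
      simp only [hv]
      split_ifs with hc
      · exact hc.2
      · exact le_rfl
    have hveq : v =ᶠ[Filter.atTop] u := by
      filter_upwards [hmem] with n hn
      simp only [hv, if_pos hn]
    have hv0 : Filter.Tendsto v Filter.atTop (nhds 0) := hu0.congr' hveq.symm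
    have hseq := seq_tendsto hf_nonneg hf_meas hfi hf1 hgi hR v hv1 hv2 hv0
    apply hseq.congr'
    filter_upwards [hveq] with n hn
    simp only [Function.comp_apply, hn]
  rw [htarget]
  exact (mainW.div_const (Real.log 2)).congr' hcongr.symm
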